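/- Let k > 0, let c : [0,∞) → ℝ be continuous with 0 < δ ≤ c(t) ≤ M for all t ≥ 0, and let v : [0,∞) → ℝ be continuous with |v(t)| ≤ C·exp(−σ t) for all t ≥ 0, for some constants C ≥ 0 and σ > 0. If η : [0,∞) → ℝ is differentiable and satisfies η'(t) = −c(t)·k·(exp(η(t) + v(t)) − 1) for all t ≥ 0, then η(t) → 0 as t → ∞. -/

import Mathlib

open Filter Real intervalIntegral

/-- `|e^x - 1| ≤ |x| e^{|x|}` for all real `x`. -/
lemma aux_abs_exp_sub_one (x : ℝ) : |Real.exp x - 1| ≤ |x| * Real.exp |x| := by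
  rcases le_or_gt 0 x with hx | hx
  · rw [abs_of_nonneg hx,
      abs_of_nonneg (by nlinarith [Real.one_le_exp hx] : (0:ℝ) ≤ Real.exp x - 1)]
    have h := mul_le_mul_of_nonneg_right (Real.add_one_le_exp (-x)) (Real.exp_pos x).le
    rw [← Real.exp_add] at h
    simp only [neg_add_cancel, Real.exp_zero] at h
    nlinarith
  · rw [abs_of_neg hx,
      abs_of_nonpos (by nlinarith [Real.exp_lt_one_iff.2 hx] : Real.exp x - 1 ≤ 0)]
    nlinarith [Real.add_one_le_exp x, Real.one_le_exp (by linarith : (0:ℝ) ≤ -x)]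

/-- Reduced scalar form of Theorem 3.8: with an exponentially decaying
perturbation `v`, solutions of `η' = -c(t)·k·(exp(η+v)-1)` converge to `0`. -/
theorem stmt_1 (k δ M C σ : ℝ) (hk : 0 < k) (hδ : 0 < δ) (hC : 0 ≤ C) (hσ : 0 < σ)
    (c v η : ℝ → ℝ)
    (hc : ContinuousOn c (Set.Ici 0))
    (hcb : ∀ t, 0 ≤ t → δ ≤ c t ∧ c t ≤ M)
    (hvcont : ContinuousOn v (Set.Ici 0))
    (hv : ∀ t, 0 ≤ t → |v t| ≤ C * Real.exp (-σ * t))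
    (hη : ∀ t, 0 ≤ t → HasDerivAt η (-(c t) * k * (Real.exp (η t + v t) - 1)) t) :
    Filter.Tendsto η Filter.atTop (nhds 0) := by
  -- continuous extensions of `c` and `v` to all of `ℝ`
  set cE : ℝ → ℝ := fun t => c (max t 0) with hcEdef
  set vE : ℝ → ℝ := fun t => v (max t 0) with hvEdef
  have hmaxmem : ∀ t : ℝ, max t 0 ∈ Set.Ici (0:ℝ) := fun t => Set.mem_Ici.2 (le_max_right _ _)
  have hmaxcont : Continuous fun t : ℝ => max t 0 := continuous_id.max continuous_const
  have hcE : Continuous cE := hc.comp_continuous hmaxcont hmaxmem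
  have hvE : Continuous vE := hvcont.comp_continuous hmaxcont hmaxmem
  have hcEeq : ∀ t, 0 ≤ t → cE t = c t := fun t ht => by
    simp [hcEdef, max_eq_left ht]
  have hvEeq : ∀ t, 0 ≤ t → vE t = v t := fun t ht => by
    simp [hvEdef, max_eq_left ht]
  have hcEb : ∀ t, δ ≤ cE t ∧ cE t ≤ M := fun t => hcb _ (le_max_right _ _)
  -- the integrating factor exponent
  set F : ℝ → ℝ := fun t => ∫ s in (0:ℝ)..t, k * cE s with hFdef
  have hkc : Continuous fun s => k * cE s := continuous_const.mul hcE
  have hF : ∀ t, HasDerivAt F (k * cE t) t := fun t =>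
    intervalIntegral.integral_hasDerivAt_right (hkc.intervalIntegrable 0 t)
      hkc.aestronglyMeasurable.stronglyMeasurableAtFilter hkc.continuousAt
  have hFc : Continuous F := continuous_iff_continuousAt.2 fun t => (hF t).continuousAt
  have hF0 : F 0 = 0 := intervalIntegral.integral_same
  -- lower bound on increments of F
  have hFlow : ∀ s t : ℝ, s ≤ t → δ * k * (t - s) ≤ F t - F s := by
    intro s t hst
    have h1 : F t - F s = ∫ x in s..t, k * cE x := by
      simp only [hFdef]
      exact (intervalIntegral.integral_interval_sub_left (μ := MeasureTheory.volume) (hkc.intervalIntegrable 0 t)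
        (hkc.intervalIntegrable 0 s))
    have h2 : (∫ x in s..t, (δ * k)) ≤ ∫ x in s..t, k * cE x := by
      apply intervalIntegral.integral_mono_on hst (intervalIntegrable_const)
        (hkc.intervalIntegrable s t)
      intro x _
      have := (hcEb x).1
      nlinarith
    rw [intervalIntegral.integral_const, smul_eq_mul] at h2
    nlinarith
  -- `y = exp (-η)`
  set y : ℝ → ℝ := fun t => Real.exp (-η t) with hydef
  have hy : ∀ t, 0 ≤ t → HasDerivAt y (k * cE t * (Real.exp (vE t) - y t)) t := by
    intro t ht
    have h1 := ((hη t ht).neg).exp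
    convert h1 using 1
    · rfl
    rw [hcEeq t ht, hvEeq t ht]
    have h2 : Real.exp (-η t) * Real.exp (η t + v t) = Real.exp (v t) := by
      rw [← Real.exp_add]; ring_nf
    simp only [hydef]
    linear_combination (-(k * c t)) * h2
  -- `w = exp F * (y - 1)` satisfies a simple ODE
  set w : ℝ → ℝ := fun t => Real.exp (F t) * (y t - 1) with hwdef
  have hw : ∀ t, 0 ≤ t →
      HasDerivAt w (Real.exp (F t) * (k * cE t * (Real.exp (vE t) - 1))) t := by
    intro t ht
    have h1 := (hF t).exp.mul ((hy t ht).sub_const 1)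
    convert h1 using 1
    · rfl
    · rfl
    · rfl
    ring
  -- the FTC identity
  set g : ℝ → ℝ := fun s => Real.exp (F s) * (k * cE s * (Real.exp (vE s) - 1)) with hgdef
  have hgc : Continuous g :=
    (Real.continuous_exp.comp hFc).mul
      (hkc.mul ((Real.continuous_exp.comp hvE).sub continuous_const))
  have hFTC : ∀ t, 0 ≤ t → w t - w 0 = ∫ s in (0:ℝ)..t, g s := by
    intro t ht
    refine (intervalIntegral.integral_eq_sub_of_hasDerivAt ?_ (hgc.intervalIntegrable 0 t)).symm
    intro x hx
    rw [Set.uIcc_of_le ht] at hx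
    exact hw x hx.1
  have hw0 : w 0 = y 0 - 1 := by simp [hwdef, hF0]
  -- constants
  set μ : ℝ := min (δ * k) σ with hμdef
  have hμ : 0 < μ := lt_min (by positivity) hσ
  set Q : ℝ := k * M * (C * Real.exp C) with hQdef
  have hM : 0 < M := lt_of_lt_of_le hδ ((hcb 0 le_rfl).1.trans (hcb 0 le_rfl).2)
  have hQ0 : 0 ≤ Q := by positivity
  -- pointwise bound on the integrand
  have hgb : ∀ t, 0 ≤ t → ∀ s ∈ Set.Ioc (0:ℝ) t,
      ‖g s‖ ≤ Real.exp (F t) * Q * Real.exp (-μ * t) := by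
    intro t ht s hs
    obtain ⟨hs0, hst⟩ := hs
    have hs0' : (0:ℝ) ≤ s := hs0.le
    have hcEs := hcEb s
    have hkcs : 0 < k * cE s := by nlinarith
    have habs : ‖g s‖ = Real.exp (F s) * (k * cE s * |Real.exp (vE s) - 1|) := by
      rw [hgdef]
      rw [Real.norm_eq_abs, abs_mul, abs_of_pos (Real.exp_pos _), abs_mul,
        abs_of_pos hkcs]
    -- bound on |exp(vE s) - 1|
    have hvs : |vE s| ≤ C * Real.exp (-σ * s) := by
      rw [hvEeq s hs0']; exact hv s hs0'
    have hvsC : |vE s| ≤ C := by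
      have : Real.exp (-σ * s) ≤ 1 := Real.exp_le_one_iff.2 (by nlinarith)
      nlinarith
    have hexpv : |Real.exp (vE s) - 1| ≤ C * Real.exp (-σ * s) * Real.exp C := by
      calc |Real.exp (vE s) - 1| ≤ |vE s| * Real.exp |vE s| := aux_abs_exp_sub_one _
        _ ≤ (C * Real.exp (-σ * s)) * Real.exp C := by
            apply mul_le_mul hvs (Real.exp_le_exp.2 hvsC) (Real.exp_pos _).le
            positivity
    -- bound on exp (F s)
    have hFs : Real.exp (F s) ≤ Real.exp (F t) * Real.exp (-(δ * k) * (t - s)) := by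
      rw [← Real.exp_add]
      apply Real.exp_le_exp.2
      have := hFlow s t hst
      linarith
    have hexps : Real.exp (-(δ * k) * (t - s)) * Real.exp (-σ * s) ≤ Real.exp (-μ * t) := by
      rw [← Real.exp_add]
      apply Real.exp_le_exp.2
      have h1 : μ ≤ δ * k := min_le_left _ _
      have h2 : μ ≤ σ := min_le_right _ _
      nlinarith
    calc ‖g s‖ = Real.exp (F s) * (k * cE s * |Real.exp (vE s) - 1|) := habs
      _ ≤ Real.exp (F s) * (k * M * (C * Real.exp (-σ * s) * Real.exp C)) := by
          apply mul_le_mul_of_nonneg_left _ (Real.exp_pos _).le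
          apply mul_le_mul _ hexpv (abs_nonneg _) (by positivity)
          nlinarith [hcEs.2]
      _ ≤ (Real.exp (F t) * Real.exp (-(δ * k) * (t - s))) *
            (k * M * (C * Real.exp (-σ * s) * Real.exp C)) := by
          apply mul_le_mul_of_nonneg_right hFs (by positivity)
      _ = Real.exp (F t) * Q *
            (Real.exp (-(δ * k) * (t - s)) * Real.exp (-σ * s)) := by
          rw [hQdef]; ring
      _ ≤ Real.exp (F t) * Q * Real.exp (-μ * t) := by
          apply mul_le_mul_of_nonneg_left hexps (mul_nonneg (Real.exp_pos _).le hQ0)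
  -- the key quantitative bound
  have hkey : ∀ t, 0 ≤ t → |y t - 1| ≤
      Real.exp (-(δ * k) * t) * |y 0 - 1| + Q * (t * Real.exp (-μ * t)) := by
    intro t ht
    have hint : ‖∫ s in (0:ℝ)..t, g s‖ ≤ Real.exp (F t) * Q * Real.exp (-μ * t) * |t - 0| := by
      apply intervalIntegral.norm_integral_le_of_norm_le_const
      intro x hx
      rw [Set.uIoc_of_le ht] at hx
      exact hgb t ht x hx
    rw [sub_zero, abs_of_nonneg ht] at hint
    have hwt : |w t| ≤ |w 0| + Real.exp (F t) * Q * Real.exp (-μ * t) * t := by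
      have h1 : w t = w 0 + ∫ s in (0:ℝ)..t, g s := by
        have := hFTC t ht; linarith
      rw [h1]
      calc |w 0 + ∫ s in (0:ℝ)..t, g s| ≤ |w 0| + |∫ s in (0:ℝ)..t, g s| := abs_add_le _ _
        _ ≤ |w 0| + Real.exp (F t) * Q * Real.exp (-μ * t) * t := by
            rw [← Real.norm_eq_abs (∫ s in (0:ℝ)..t, g s)]; linarith
    have hwty : |w t| = Real.exp (F t) * |y t - 1| := by
      rw [hwdef, abs_mul, abs_of_pos (Real.exp_pos _)]
    have hFt : δ * k * t ≤ F t := by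
      have := hFlow 0 t ht; rw [hF0] at this; linarith
    have hexpFt : Real.exp (δ * k * t) ≤ Real.exp (F t) := Real.exp_le_exp.2 hFt
    have hEpos : 0 < Real.exp (F t) := Real.exp_pos _
    rw [hwty, hw0] at hwt
    -- divide by exp (F t)
    have h2 : |y t - 1| ≤ |y 0 - 1| / Real.exp (F t) + Q * Real.exp (-μ * t) * t := by
      rw [div_add' _ _ _ (ne_of_gt hEpos), ← sub_nonneg]
      have expand : (|y 0 - 1| + Q * Real.exp (-μ * t) * t * Real.exp (F t)) / Real.exp (F t)
          - |y t - 1|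
          = ((|y 0 - 1| + Real.exp (F t) * Q * Real.exp (-μ * t) * t)
              - Real.exp (F t) * |y t - 1|) / Real.exp (F t) := by
        field_simp
      rw [expand]
      apply div_nonneg _ hEpos.le
      linarith
    have h3 : |y 0 - 1| / Real.exp (F t) ≤ Real.exp (-(δ * k) * t) * |y 0 - 1| := by
      rw [neg_mul, Real.exp_neg, div_eq_mul_inv, mul_comm]
      apply mul_le_mul_of_nonneg_right _ (abs_nonneg _)
      gcongr
    calc |y t - 1| ≤ |y 0 - 1| / Real.exp (F t) + Q * Real.exp (-μ * t) * t := h2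
      _ ≤ Real.exp (-(δ * k) * t) * |y 0 - 1| + Q * (t * Real.exp (-μ * t)) := by
          have : Q * Real.exp (-μ * t) * t = Q * (t * Real.exp (-μ * t)) := by ring
          linarith [h3, this.le]
  -- the bound tends to 0
  have hB1 : Tendsto (fun t => Real.exp (-(δ * k) * t) * |y 0 - 1|) atTop (nhds 0) := by
    have h1 : Tendsto (fun t : ℝ => (δ * k) * t) atTop atTop :=
      Tendsto.const_mul_atTop (by positivity) tendsto_id
    have h2 := Real.tendsto_exp_neg_atTop_nhds_zero.comp h1
    have h3 : Tendsto (fun t => Real.exp (-(δ * k) * t)) atTop (nhds 0) := by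
      apply h2.congr
      intro t
      simp [Function.comp, neg_mul]
    simpa using h3.mul_const |y 0 - 1|
  have hB2 : Tendsto (fun t => Q * (t * Real.exp (-μ * t))) atTop (nhds 0) := by
    have h1 : Tendsto (fun t : ℝ => μ * t) atTop atTop :=
      Tendsto.const_mul_atTop hμ tendsto_id
    have h2 := (Real.tendsto_pow_mul_exp_neg_atTop_nhds_zero 1).comp h1
    have hμ' : μ ≠ 0 := ne_of_gt hμ
    have h3 := h2.const_mul (1 / μ)
    rw [mul_zero] at h3
    have h4 : Tendsto (fun t : ℝ => t * Real.exp (-μ * t)) atTop (nhds 0) := by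
      refine Tendsto.congr (fun t => ?_) h3
      simp only [Function.comp_apply, pow_one, neg_mul]
      field_simp
    simpa using h4.const_mul Q
  have hB : Tendsto (fun t => Real.exp (-(δ * k) * t) * |y 0 - 1|
      + Q * (t * Real.exp (-μ * t))) atTop (nhds 0) := by
    simpa using hB1.add hB2
  -- squeeze
  have habs : Tendsto (fun t => |y t - 1|) atTop (nhds 0) := by
    apply squeeze_zero' (Eventually.of_forall fun t => abs_nonneg _)
      ((eventually_ge_atTop (0:ℝ)).mono fun t ht => hkey t ht) hB
  have hy1 : Tendsto y atTop (nhds 1) := by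
    have h1 : Tendsto (fun t => y t - 1) atTop (nhds 0) :=
      (tendsto_zero_iff_abs_tendsto_zero _).2 habs
    have h2 := h1.add_const 1
    simpa using h2
  -- conclude for η
  have hlog : Tendsto (fun t => Real.log (y t)) atTop (nhds (Real.log 1)) :=
    ((Real.continuousAt_log one_ne_zero).tendsto).comp hy1
  have hneg : Tendsto (fun t => -Real.log (y t)) atTop (nhds 0) := by
    have := hlog.neg
    simpa using this
  apply hneg.congr
  intro t
  simp [hydef, Real.log_exp]
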